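/- Let f : ℝⁿ → ℝ be quasi-convex, upper semicontinuous, and 0-lower semicontinuous, with S^f_{<,0} ≠ ∅, satisfying property (sHöl) on S^f_{≤,0} with order δ > 0 and modulus L > 0, let c : ℝⁿ → ℝⁿ be a selection with c(x) ∈ ∂*f(x) \ {0} whenever f(x) > 0, and let P_f be the associated star subgradient projection. Then P_f is fixed-point closed: for every sequence {x_k} in ℝⁿ with x_k → x and ‖P_f(x_k) − x_k‖ → 0, one has x ∈ Fix P_f. -/

import Mathlib

/-- The star subdifferential of `f` at `x`. -/
def starSubdiff {n : ℕ} (f : EuclideanSpace ℝ (Fin n) → ℝ) (x : EuclideanSpace ℝ (Fin n)) :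
    Set (EuclideanSpace ℝ (Fin n)) :=
  {g | ∀ y : EuclideanSpace ℝ (Fin n), f y < f x → (inner ℝ g (y - x) : ℝ) ≤ 0}

/-- The star subgradient projection relative to `f`, with modulus `L`, order `δ` and
star subgradient selection `c`. -/
noncomputable def starProj {n : ℕ} (f : EuclideanSpace ℝ (Fin n) → ℝ) (L δ : ℝ)
    (c : EuclideanSpace ℝ (Fin n) → EuclideanSpace ℝ (Fin n)) (x : EuclideanSpace ℝ (Fin n)) :
    EuclideanSpace ℝ (Fin n) :=
  if 0 < f x then x - ((max (f x) 0 / L) ^ (1 / δ)) • (‖c x‖⁻¹ • c x) else x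

/-- The star subgradient projection is fixed-point closed: if `x_k → x` and
`‖P_f x_k - x_k‖ → 0`, then `x` is a fixed point of `P_f`. -/
theorem starProj_fixedPointClosed {n : ℕ}
    (f : EuclideanSpace ℝ (Fin n) → ℝ) (δ L : ℝ) (hδ : 0 < δ) (hL : 0 < L)
    (hqc : ∀ lam : ℝ, Convex ℝ {y : EuclideanSpace ℝ (Fin n) | f y ≤ lam})
    (husc : ∀ lam : ℝ, IsOpen {y : EuclideanSpace ℝ (Fin n) | f y < lam})
    (hlsc0 : IsClosed {y : EuclideanSpace ℝ (Fin n) | f y ≤ 0})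
    (hne : {y : EuclideanSpace ℝ (Fin n) | f y < 0}.Nonempty)
    (hhol : ∀ q x' : EuclideanSpace ℝ (Fin n), f q ≤ 0 → |f x' - f q| ≤ L * ‖x' - q‖ ^ δ)
    (c : EuclideanSpace ℝ (Fin n) → EuclideanSpace ℝ (Fin n))
    (hc : ∀ x, 0 < f x → c x ∈ starSubdiff f x ∧ c x ≠ 0)
    (xs : ℕ → EuclideanSpace ℝ (Fin n)) (x : EuclideanSpace ℝ (Fin n))
    (hxs : Filter.Tendsto xs Filter.atTop (nhds x))
    (hres : Filter.Tendsto (fun k => ‖starProj f L δ c (xs k) - xs k‖) Filter.atTop (nhds 0)) :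
    starProj f L δ c x = x := by
  have hfx : ¬ 0 < f x := by
    intro hfx
    -- residual formula
    have hres' : ∀ k, ‖starProj f L δ c (xs k) - xs k‖ = (max (f (xs k)) 0 / L) ^ (1/δ) := by
      intro k
      by_cases h : 0 < f (xs k)
      · have hc' := hc (xs k) h
        rw [starProj, if_pos h, sub_sub_cancel_left, norm_neg, norm_smul, norm_smul,
            norm_inv, norm_norm, inv_mul_cancel₀ (norm_ne_zero_iff.2 hc'.2), mul_one,
            Real.norm_eq_abs, abs_of_nonneg]
        exact Real.rpow_nonneg (div_nonneg (le_max_right _ _) hL.le) _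
      · rw [starProj, if_neg h, sub_self, norm_zero, max_eq_right (not_lt.1 h), zero_div,
            Real.zero_rpow (one_div_ne_zero hδ.ne')]
    -- f₊(xs k) → 0
    have hmax : Filter.Tendsto (fun k => max (f (xs k)) 0) Filter.atTop (nhds 0) := by
      have h1 : Filter.Tendsto (fun k => ‖starProj f L δ c (xs k) - xs k‖ ^ δ)
          Filter.atTop (nhds 0) := by
        have := hres.rpow_const (p := δ) (Or.inr hδ.le)
        rwa [Real.zero_rpow hδ.ne'] at this
      have h2 : (fun k => ‖starProj f L δ c (xs k) - xs k‖ ^ δ)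
          = fun k => max (f (xs k)) 0 / L := by
        funext k
        rw [hres' k, one_div, Real.rpow_inv_rpow (div_nonneg (le_max_right _ _) hL.le) hδ.ne']
      rw [h2] at h1
      have h3 := h1.const_mul L
      have h4 : (fun k => L * (max (f (xs k)) 0 / L)) = fun k => max (f (xs k)) 0 := by
        funext k; field_simp
      rwa [h4, mul_zero] at h3
    obtain ⟨q, hq⟩ := hne
    have hxq : x ≠ q := by
      intro h; rw [h] at hfx; exact absurd hq (not_lt.2 hfx.le)
    have hd : 0 < ‖x - q‖ := by rwa [norm_pos_iff, sub_ne_zero]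
    set A : ℝ := (f x / (2 * L)) ^ (1/δ) with hA
    have hApos : 0 < A := Real.rpow_pos_of_pos (by positivity) _
    set s : ℝ := min 1 (A / ‖x - q‖) with hs
    have hs0 : 0 < s := lt_min one_pos (by positivity)
    have hs1 : s ≤ 1 := min_le_left _ _
    have hsd : s * ‖x - q‖ ≤ A := by
      have : s ≤ A / ‖x - q‖ := min_le_right _ _
      calc s * ‖x - q‖ ≤ (A / ‖x - q‖) * ‖x - q‖ :=
            mul_le_mul_of_nonneg_right this hd.le
        _ = A := div_mul_cancel₀ _ hd.ne'
    set z : EuclideanSpace ℝ (Fin n) := x + s • (q - x) with hzdef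
    -- f z ≤ 0
    have hz : f z ≤ 0 := by
      by_contra hzpos
      push_neg at hzpos
      set y : ℕ → EuclideanSpace ℝ (Fin n) := fun k => q + ((1 - s)/s) • (x - xs k) with hy
      have hyt : Filter.Tendsto y Filter.atTop (nhds q) := by
        have h0 : Filter.Tendsto (fun k => x - xs k) Filter.atTop (nhds 0) := by
          simpa using hxs.const_sub x
        have := (h0.const_smul ((1 - s)/s)).const_add q
        simpa using this
      have hev1 : ∀ᶠ k in Filter.atTop, f (y k) < 0 :=
        hyt.eventually_mem ((husc 0).mem_nhds hq)
      have hev2 : ∀ᶠ k in Filter.atTop, max (f (xs k)) 0 < f z / 2 :=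
        hmax.eventually_lt_const (by linarith)
      obtain ⟨k, hk1, hk2⟩ := (hev1.and hev2).exists
      have hconv := hqc (f z / 2)
      have hyk : y k ∈ {w : EuclideanSpace ℝ (Fin n) | f w ≤ f z / 2} :=
        le_of_lt (lt_trans hk1 (by linarith))
      have hxk : xs k ∈ {w : EuclideanSpace ℝ (Fin n) | f w ≤ f z / 2} :=
        le_of_lt (lt_of_le_of_lt (le_max_left _ _) hk2)
      have hcomb := hconv (a := s) (b := 1 - s) hyk hxk hs0.le (by linarith) (by ring)
      have hzeq : z = s • y k + (1 - s) • xs k := by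
        have hss : s * ((1 - s) / s) = 1 - s := by field_simp
        simp only [hzdef, hy, smul_add, smul_smul, hss]
        module
      rw [← hzeq] at hcomb
      have : f z ≤ f z / 2 := hcomb
      linarith
    -- Hölder contradiction
    have hhxz := hhol z x hz
    have hnorm : ‖x - z‖ = s * ‖x - q‖ := by
      have : x - z = s • (x - q) := by
        simp only [hzdef]; module
      rw [this, norm_smul, Real.norm_eq_abs, abs_of_pos hs0]
    have hpow : ‖x - z‖ ^ δ ≤ f x / (2 * L) := by
      rw [hnorm]
      calc (s * ‖x - q‖) ^ δ ≤ A ^ δ := Real.rpow_le_rpow (by positivity) hsd hδ.le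
        _ = f x / (2 * L) := by
          rw [hA, one_div, Real.rpow_inv_rpow (by positivity) hδ.ne']
    have h5 : f x - f z ≤ L * ‖x - z‖ ^ δ := (abs_le.1 hhxz).2
    have h6 : L * ‖x - z‖ ^ δ ≤ L * (f x / (2 * L)) :=
      mul_le_mul_of_nonneg_left hpow hL.le
    have h7 : L * (f x / (2 * L)) = f x / 2 := by field_simp
    linarith
  simp [starProj, hfx]
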